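/- The moment recursion for the linear-implicit Milstein scheme: suppose Y^(i)_{n+1} = Y^(i)_n · R_n · (Q_n^(i))^{-1} where Y^(i)_n > 0, the random variables R_n := (1/2)(1 + Σ_j σ^(ij) ΔW_n^(j))² + 1/2 (with ΔW_n^(j) independent N(0,h) Gaussians, independent of Y_n), and (Q_n^(i))^{-1} ≤ 1 + Ch for a deterministic constant C. Then for every integer p ≥ 1 there is a constant C_p depending only on p, C, m, σ̄, T (with nh ≤ T) such that E[(Y^(i)_n)^p] ≤ C_p · (Y^(i)_0)^p for all 0 ≤ n ≤ N = T/h. -/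

import Mathlib

open MeasureTheory ProbabilityTheory
open scoped BigOperators

open MeasureTheory ProbabilityTheory Real Set
open scoped ENNReal BigOperators NNReal

variable {Ω : Type} {mΩ : MeasurableSpace Ω} {μ : Measure Ω}




lemma lintegral_indicator_le_of_indep [IsProbabilityMeasure μ]
    (F : Ω → ℝ≥0∞) {A : Set Ω} (hA : MeasurableSet A)
    (hind : ∀ B : Set ℝ≥0∞, MeasurableSet B → μ (F ⁻¹' B ∩ A) = μ (F ⁻¹' B) * μ A) :
    ∫⁻ ω, A.indicator F ω ∂μ ≤ μ A * ∫⁻ ω, F ω ∂μ := by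
  classical
  refine ENNReal.le_of_forall_pos_le_add fun ε' hε' _ => ?_
  set ε : ℝ≥0∞ := (ε' : ℝ≥0∞) with hεdef
  have hε : 0 < ε := ENNReal.coe_pos.2 hε'
  have hεtop : ε ≠ ∞ := ENNReal.coe_ne_top
  obtain ⟨f₀, hf₀m, hf₀le, hf₀eq⟩ := exists_measurable_le_lintegral_eq μ (A.indicator F)
  -- measurable kernels approximating the level sets of F from inside
  set T : ℕ → Set Ω := fun j => F ⁻¹' (Set.Iio ((j : ℝ≥0∞) * ε)) with hT
  have hWch : ∀ j : ℕ, ∃ W : Set Ω, T j ⊆ W ∧ MeasurableSet W ∧ μ W = μ (T j) :=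
    fun j => exists_measurable_superset μ (T j)
  choose W hWsub hWmeas hWμ using hWch
  set W' : ℕ → Set Ω := fun j => ⋂ (i : ℕ) (_ : j ≤ i), W i with hW'
  have hW'meas : ∀ j, MeasurableSet (W' j) := fun j =>
    MeasurableSet.iInter fun i => MeasurableSet.iInter fun _ => hWmeas i
  have hTmono : ∀ j i : ℕ, j ≤ i → T j ⊆ T i := by
    intro j i hij ω hω
    simp only [hT, Set.mem_preimage, Set.mem_Iio] at hω ⊢
    exact lt_of_lt_of_le hω (mul_le_mul_left (by exact_mod_cast hij) ε)
  have hW'supT : ∀ j, T j ⊆ W' j := by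
    intro j
    refine Set.subset_iInter fun i => Set.subset_iInter fun hij => ?_
    exact (hTmono j i hij).trans (hWsub i)
  have hW'mono : ∀ j j' : ℕ, j ≤ j' → W' j ⊆ W' j' := by
    intro j j' hjj ω hω
    refine Set.mem_iInter.2 fun i => Set.mem_iInter.2 fun hi => ?_
    exact Set.mem_iInter.1 (Set.mem_iInter.1 hω i) (hjj.trans hi)
  have hW'μ : ∀ j, μ (W' j) = μ (T j) := by
    intro j
    refine le_antisymm ?_ (measure_mono (hW'supT j))
    refine le_trans (measure_mono ?_) (hWμ j).le
    exact Set.iInter_subset_of_subset j (Set.iInter_subset _ le_rfl)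
  set U : ℕ → Set Ω := fun j => (W' j)ᶜ with hU
  have hUmeas : ∀ j, MeasurableSet (U j) := fun j => (hW'meas j).compl
  have hUsub : ∀ j, U j ⊆ {ω | (j : ℝ≥0∞) * ε ≤ F ω} := by
    intro j ω hω
    by_contra hcon
    exact hω (hW'supT j (by simpa [hT, Set.mem_preimage] using lt_of_not_ge hcon))
  have hUanti : ∀ j j' : ℕ, j ≤ j' → U j' ⊆ U j := fun j j' hjj =>
    Set.compl_subset_compl.2 (hW'mono j j' hjj)
  -- key measure bound
  have hkey : ∀ j : ℕ, 1 ≤ j → μ {ω | (j : ℝ≥0∞) * ε ≤ f₀ ω} ≤ μ A * μ (U j) := by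
    intro j hj
    set S : Set Ω := {ω | (j : ℝ≥0∞) * ε ≤ f₀ ω} with hS
    have hSmeas : MeasurableSet S := measurableSet_le measurable_const hf₀m
    have hεj : 0 < (j : ℝ≥0∞) * ε :=
      ENNReal.mul_pos (Nat.cast_ne_zero.2 (by omega)) hε.ne'
    have hSsubA : S ⊆ A := by
      intro ω hω
      by_contra hcon
      have : f₀ ω = 0 := le_antisymm (by simpa [Set.indicator_of_notMem hcon] using hf₀le ω)
        zero_le
      rw [hS, Set.mem_setOf_eq, this] at hω
      exact hεj.ne' (le_antisymm hω zero_le)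
    have hTAS : T j ∩ A ⊆ A \ S := by
      intro ω ⟨hω1, hω2⟩
      refine ⟨hω2, fun hωS => ?_⟩
      have h1 : f₀ ω ≤ F ω := le_trans (hf₀le ω) (by rw [Set.indicator_of_mem hω2])
      have h2 : F ω < (j : ℝ≥0∞) * ε := by simpa [hT] using hω1
      exact absurd hωS (by simp only [hS, Set.mem_setOf_eq, not_le]; exact lt_of_le_of_lt h1 h2)
    have hsplit : μ S + μ (A \ S) = μ A := by
      have := measure_inter_add_diff (μ := μ) A hSmeas
      rwa [Set.inter_eq_right.2 hSsubA] at this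
    have hdiff : μ (W' j) * μ A ≤ μ (A \ S) := by
      calc μ (W' j) * μ A = μ (T j) * μ A := by rw [hW'μ]
        _ = μ (T j ∩ A) := (hind _ measurableSet_Iio).symm
        _ ≤ μ (A \ S) := measure_mono hTAS
    have hcompl : μ (W' j) + μ (U j) = 1 := by
      rw [hU]
      rw [measure_add_measure_compl (hW'meas j)]
      exact measure_univ
    have hfin : μ (W' j) * μ A ≠ ∞ :=
      (ENNReal.mul_lt_top (measure_lt_top μ _) (measure_lt_top μ _)).ne
    have : μ S + μ (W' j) * μ A ≤ μ A * μ (U j) + μ (W' j) * μ A := by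
      calc μ S + μ (W' j) * μ A ≤ μ S + μ (A \ S) := add_le_add_right hdiff _
        _ = μ A := hsplit
        _ = μ A * 1 := (mul_one _).symm
        _ = μ A * (μ (W' j) + μ (U j)) := by rw [hcompl]
        _ = μ A * μ (U j) + μ (W' j) * μ A := by ring
    exact (ENNReal.add_le_add_iff_right hfin).1 this
  -- pointwise layered bound on f₀
  have hptwise : ∀ ω, f₀ ω ≤ ε + ∑' j : ℕ,
      Set.indicator {ω' | ((j + 1 : ℕ) : ℝ≥0∞) * ε ≤ f₀ ω'} (fun _ => ε) ω := by
    intro ω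
    by_cases hxtop : f₀ ω = ∞
    · have : ∀ j : ℕ, Set.indicator {ω' | ((j + 1 : ℕ) : ℝ≥0∞) * ε ≤ f₀ ω'} (fun _ => ε) ω = ε :=
        fun j => Set.indicator_of_mem (by simp [hxtop]) _
      rw [tsum_congr this, ENNReal.tsum_const_eq_top_of_ne_zero hε.ne']
      simp
    · have hex : ∃ k : ℕ, f₀ ω < ((k + 1 : ℕ) : ℝ≥0∞) * ε := by
        obtain ⟨k, hk⟩ := ENNReal.exists_nat_gt
          (show f₀ ω / ε ≠ ∞ by simp [ENNReal.div_eq_top, hxtop, hε.ne'])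
        refine ⟨k, ?_⟩
        have := (ENNReal.div_lt_iff (Or.inl hε.ne') (Or.inl hεtop)).1 hk
        exact lt_of_lt_of_le this (mul_le_mul_left (by exact_mod_cast Nat.le_succ k) ε)
      set k := Nat.find hex with hkdef
      have hklt : f₀ ω < ((k + 1 : ℕ) : ℝ≥0∞) * ε := Nat.find_spec hex
      have hjge : ∀ i : ℕ, i < k → ((i + 1 : ℕ) : ℝ≥0∞) * ε ≤ f₀ ω := fun i hi =>
        le_of_not_gt (Nat.find_min hex hi)
      calc f₀ ω ≤ ((k + 1 : ℕ) : ℝ≥0∞) * ε := hklt.le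
        _ = ε + (k : ℝ≥0∞) * ε := by
            push_cast
            ring
        _ ≤ ε + ∑' j : ℕ, Set.indicator {ω' | ((j + 1 : ℕ) : ℝ≥0∞) * ε ≤ f₀ ω'}
              (fun _ => ε) ω := by
            refine add_le_add_right ?_ ε
            have : ∀ i ∈ Finset.range k, Set.indicator
                {ω' | ((i + 1 : ℕ) : ℝ≥0∞) * ε ≤ f₀ ω'} (fun _ => ε) ω = ε := fun i hi =>
              Set.indicator_of_mem
                (show ω ∈ {ω' | ((i + 1 : ℕ) : ℝ≥0∞) * ε ≤ f₀ ω'} from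
                  hjge i (Finset.mem_range.1 hi)) (fun _ => ε)
            calc (k : ℝ≥0∞) * ε = ∑ i ∈ Finset.range k, ε := by
                  simp [Finset.sum_const, nsmul_eq_mul]
              _ = ∑ i ∈ Finset.range k, Set.indicator
                  {ω' | ((i + 1 : ℕ) : ℝ≥0∞) * ε ≤ f₀ ω'} (fun _ => ε) ω :=
                  (Finset.sum_congr rfl this).symm
              _ ≤ _ := ENNReal.sum_le_tsum _
  -- integrate the pointwise bound
  have hSmeas' : ∀ j : ℕ, MeasurableSet {ω' | ((j + 1 : ℕ) : ℝ≥0∞) * ε ≤ f₀ ω'} :=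
    fun j => measurableSet_le measurable_const hf₀m
  have hint1 : ∫⁻ ω, f₀ ω ∂μ ≤ ε + ∑' j : ℕ,
      ε * μ {ω' | ((j + 1 : ℕ) : ℝ≥0∞) * ε ≤ f₀ ω'} := by
    calc ∫⁻ ω, f₀ ω ∂μ ≤ ∫⁻ ω, (ε + ∑' j : ℕ,
        Set.indicator {ω' | ((j + 1 : ℕ) : ℝ≥0∞) * ε ≤ f₀ ω'} (fun _ => ε) ω) ∂μ :=
        lintegral_mono hptwise
      _ = ε + ∫⁻ ω, ∑' j : ℕ,
          Set.indicator {ω' | ((j + 1 : ℕ) : ℝ≥0∞) * ε ≤ f₀ ω'} (fun _ => ε) ω ∂μ := by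
          rw [lintegral_add_left measurable_const]
          simp [measure_univ]
      _ = ε + ∑' j : ℕ, ∫⁻ ω,
          Set.indicator {ω' | ((j + 1 : ℕ) : ℝ≥0∞) * ε ≤ f₀ ω'} (fun _ => ε) ω ∂μ := by
          rw [lintegral_tsum fun j => (measurable_const.indicator (hSmeas' j)).aemeasurable]
      _ = ε + ∑' j : ℕ, ε * μ {ω' | ((j + 1 : ℕ) : ℝ≥0∞) * ε ≤ f₀ ω'} := by
          congr 1
          refine tsum_congr fun j => ?_
          rw [lintegral_indicator (hSmeas' j), setLIntegral_const]
  -- bound the tsum using the kernels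
  have hUsum : ∑' j : ℕ, ε * μ {ω' | ((j + 1 : ℕ) : ℝ≥0∞) * ε ≤ f₀ ω'} ≤
      μ A * ∫⁻ ω, F ω ∂μ := by
    have hterm : ∀ j : ℕ, ε * μ {ω' | ((j + 1 : ℕ) : ℝ≥0∞) * ε ≤ f₀ ω'} ≤
        μ A * (ε * μ (U (j + 1))) := fun j => by
      rw [← mul_assoc, mul_comm (μ A) ε, mul_assoc]
      exact mul_le_mul_right (hkey (j + 1) (Nat.le_add_left 1 j)) ε
    refine le_trans (ENNReal.tsum_le_tsum hterm) ?_
    rw [ENNReal.tsum_mul_left]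
    refine mul_le_mul_right ?_ (μ A)
    -- ∑' j, ε * μ (U (j+1)) ≤ ∫⁻ F
    have heq : ∀ j : ℕ, ε * μ (U (j + 1)) = ∫⁻ ω, Set.indicator (U (j + 1)) (fun _ => ε) ω ∂μ :=
      fun j => by rw [lintegral_indicator (hUmeas (j + 1)), setLIntegral_const]
    calc ∑' j : ℕ, ε * μ (U (j + 1))
        = ∑' j : ℕ, ∫⁻ ω, Set.indicator (U (j + 1)) (fun _ => ε) ω ∂μ := tsum_congr heq
      _ = ∫⁻ ω, ∑' j : ℕ, Set.indicator (U (j + 1)) (fun _ => ε) ω ∂μ :=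
          (lintegral_tsum fun j => (measurable_const.indicator (hUmeas (j + 1))).aemeasurable).symm
      _ ≤ ∫⁻ ω, F ω ∂μ := by
          refine lintegral_mono fun ω => ?_
          rw [ENNReal.tsum_eq_iSup_sum]
          refine iSup_le fun s => ?_
          have hsum_eq : ∑ j ∈ s, Set.indicator (U (j + 1)) (fun _ => ε) ω =
              ∑ j ∈ s.filter (fun j => ω ∈ U (j + 1)), ε := by
            rw [Finset.sum_filter]
            refine Finset.sum_congr rfl fun j _ => ?_
            by_cases hj : ω ∈ U (j + 1) <;> simp [Set.indicator, hj]
          rw [hsum_eq]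
          set s' := s.filter (fun j => ω ∈ U (j + 1)) with hs'
          rcases Finset.eq_empty_or_nonempty s' with hse | hse
          · simp [hse]
          · set J := s'.max' hse with hJ
            have hωJ : ω ∈ U (J + 1) :=
              (Finset.mem_filter.mp (s'.max'_mem hse)).2
            have hcard : s'.card ≤ J + 1 := by
              have hsub : s' ⊆ Finset.range (J + 1) := fun x hx =>
                Finset.mem_range.2 (Nat.lt_succ_of_le (Finset.le_max' s' x hx))
              simpa using Finset.card_le_card hsub
            calc ∑ _j ∈ s', ε = (s'.card : ℝ≥0∞) * ε := by
                  simp [Finset.sum_const, nsmul_eq_mul]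
              _ ≤ ((J + 1 : ℕ) : ℝ≥0∞) * ε := mul_le_mul_left (by exact_mod_cast hcard) ε
              _ ≤ F ω := hUsub (J + 1) hωJ
  calc ∫⁻ ω, A.indicator F ω ∂μ = ∫⁻ ω, f₀ ω ∂μ := hf₀eq
    _ ≤ ε + ∑' j : ℕ, ε * μ {ω' | ((j + 1 : ℕ) : ℝ≥0∞) * ε ≤ f₀ ω'} := hint1
    _ ≤ ε + μ A * ∫⁻ ω, F ω ∂μ := add_le_add_right hUsum ε
    _ = μ A * ∫⁻ ω, F ω ∂μ + ε := add_comm _ _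

/-- Factorization inequality for the lower Lebesgue integral of a product of independent
random variables, where only one of them needs to be measurable. -/
lemma lintegral_mul_le_of_indepFun [IsProbabilityMeasure μ]
    (F G : Ω → ℝ≥0∞) (hG : Measurable G) (hGfin : ∀ ω, G ω ≠ ∞)
    (hG0 : ∫⁻ ω, G ω ∂μ ≠ 0) (hFG : IndepFun F G μ) :
    ∫⁻ ω, F ω * G ω ∂μ ≤ (∫⁻ ω, F ω ∂μ) * ∫⁻ ω, G ω ∂μ := by
  have hind := indepFun_iff_measure_inter_preimage_eq_mul.1 hFG
  have subclaim : ∀ ε : ℝ≥0∞, 0 < ε → ε ≠ ∞ →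
      ∫⁻ ω, F ω * G ω ∂μ ≤ (∫⁻ ω, G ω ∂μ + ε) * ∫⁻ ω, F ω ∂μ := by
    intro ε hε hεtop
    set A : ℕ → Set Ω := fun i => G ⁻¹' (Set.Ico ((i : ℝ≥0∞) * ε) (((i + 1 : ℕ) : ℝ≥0∞) * ε))
      with hA
    have hAmeas : ∀ i, MeasurableSet (A i) := fun i => hG measurableSet_Ico
    have hAdisj : Pairwise (Function.onFun Disjoint A) := by
      intro i j hij
      have key : ∀ i j : ℕ, i < j → Disjoint (A i) (A j) := by
        intro i j hlt
        rw [Set.disjoint_left]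
        rintro ω ⟨hi1, hi2⟩ ⟨hj1, hj2⟩
        have h1 : ((i + 1 : ℕ) : ℝ≥0∞) * ε ≤ (j : ℝ≥0∞) * ε :=
          mul_le_mul_left (by exact_mod_cast hlt) ε
        exact absurd (lt_of_lt_of_le hi2 (le_trans h1 hj1)) (lt_irrefl _)
      rcases lt_or_gt_of_ne hij with h | h
      · exact key _ _ h
      · exact (key _ _ h).symm
    have hAcover : (⋃ i, A i) = Set.univ := by
      refine Set.eq_univ_of_forall fun ω => Set.mem_iUnion.2 ?_
      have hex : ∃ i : ℕ, G ω < ((i + 1 : ℕ) : ℝ≥0∞) * ε := by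
        obtain ⟨k, hk⟩ := ENNReal.exists_nat_gt
          (show G ω / ε ≠ ∞ by simp [ENNReal.div_eq_top, hGfin ω, hε.ne'])
        refine ⟨k, lt_of_lt_of_le ((ENNReal.div_lt_iff (Or.inl hε.ne') (Or.inl hεtop)).1 hk) ?_⟩
        exact mul_le_mul_left (by exact_mod_cast Nat.le_succ k) ε
      refine ⟨Nat.find hex, ?_, Nat.find_spec hex⟩
      rcases Nat.eq_zero_or_pos (Nat.find hex) with h0 | hpos
      · rw [h0]
        simp
      · obtain ⟨i', hi'⟩ := Nat.exists_eq_succ_of_ne_zero hpos.ne'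
        rw [hi']
        have := Nat.find_min hex (m := i') (by omega)
        push_neg at this
        simpa using this
    have hterm : ∀ i : ℕ, ∫⁻ ω in A i, F ω * G ω ∂μ ≤
        (((i + 1 : ℕ) : ℝ≥0∞) * ε) * (μ (A i) * ∫⁻ ω, F ω ∂μ) := by
      intro i
      rw [← lintegral_indicator (hAmeas i)]
      have hpt : ∀ ω, (A i).indicator (fun ω' => F ω' * G ω') ω ≤
          (((i + 1 : ℕ) : ℝ≥0∞) * ε) * (A i).indicator F ω := by
        intro ω
        by_cases hω : ω ∈ A i
        · rw [Set.indicator_of_mem hω, Set.indicator_of_mem hω]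
          rw [mul_comm (((i + 1 : ℕ) : ℝ≥0∞) * ε) (F ω)]
          exact mul_le_mul_right (le_of_lt hω.2) (F ω)
        · rw [Set.indicator_of_notMem hω, Set.indicator_of_notMem hω, mul_zero]
      calc ∫⁻ ω, (A i).indicator (fun ω' => F ω' * G ω') ω ∂μ
          ≤ ∫⁻ ω, (((i + 1 : ℕ) : ℝ≥0∞) * ε) * (A i).indicator F ω ∂μ := lintegral_mono hpt
        _ = (((i + 1 : ℕ) : ℝ≥0∞) * ε) * ∫⁻ ω, (A i).indicator F ω ∂μ :=
            lintegral_const_mul' _ _ (ENNReal.mul_ne_top (ENNReal.natCast_ne_top _) hεtop)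
        _ ≤ (((i + 1 : ℕ) : ℝ≥0∞) * ε) * (μ (A i) * ∫⁻ ω, F ω ∂μ) := by
            refine mul_le_mul_right ?_ _
            exact lintegral_indicator_le_of_indep F (hAmeas i)
              (fun B hB => hind B _ hB measurableSet_Ico)
    have hsum1 : ∑' i : ℕ, ((i : ℝ≥0∞) * ε) * μ (A i) ≤ ∫⁻ ω, G ω ∂μ := by
      have h1 : ∀ i : ℕ, ((i : ℝ≥0∞) * ε) * μ (A i) ≤ ∫⁻ ω in A i, G ω ∂μ := by
        intro i
        rw [← setLIntegral_const (A i) ((i : ℝ≥0∞) * ε)]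
        exact setLIntegral_mono hG fun ω hω => hω.1
      refine le_trans (ENNReal.tsum_le_tsum h1) ?_
      rw [← lintegral_iUnion hAmeas hAdisj, hAcover, setLIntegral_univ]
    have hsum2 : ∑' i : ℕ, ε * μ (A i) = ε := by
      rw [ENNReal.tsum_mul_left, ← measure_iUnion hAdisj hAmeas, hAcover, measure_univ, mul_one]
    calc ∫⁻ ω, F ω * G ω ∂μ = ∫⁻ ω in Set.univ, F ω * G ω ∂μ := (setLIntegral_univ _).symm
      _ = ∫⁻ ω in ⋃ i, A i, F ω * G ω ∂μ := by rw [hAcover]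
      _ ≤ ∑' i : ℕ, ∫⁻ ω in A i, F ω * G ω ∂μ := lintegral_iUnion_le A _
      _ ≤ ∑' i : ℕ, (((i + 1 : ℕ) : ℝ≥0∞) * ε) * (μ (A i) * ∫⁻ ω, F ω ∂μ) :=
          ENNReal.tsum_le_tsum hterm
      _ = (∑' i : ℕ, (((i + 1 : ℕ) : ℝ≥0∞) * ε) * μ (A i)) * ∫⁻ ω, F ω ∂μ := by
          rw [← ENNReal.tsum_mul_right]
          exact tsum_congr fun i => by ring
      _ ≤ (∫⁻ ω, G ω ∂μ + ε) * ∫⁻ ω, F ω ∂μ := by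
          refine mul_le_mul_left ?_ _
          have : ∀ i : ℕ, (((i + 1 : ℕ) : ℝ≥0∞) * ε) * μ (A i) =
              ((i : ℝ≥0∞) * ε) * μ (A i) + ε * μ (A i) := by
            intro i
            push_cast
            ring
          rw [tsum_congr this, ENNReal.tsum_add, hsum2]
          exact add_le_add_left hsum1 ε
  by_cases hFtop : ∫⁻ ω, F ω ∂μ = ∞
  · rw [hFtop, ENNReal.top_mul hG0]
    exact le_top
  by_cases hF0 : ∫⁻ ω, F ω ∂μ = 0
  · refine le_trans (subclaim 1 one_pos ENNReal.one_ne_top) ?_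
    simp [hF0]
  refine ENNReal.le_of_forall_pos_le_add fun ε' hε' _ => ?_
  set ε : ℝ≥0∞ := (ε' : ℝ≥0∞) / ∫⁻ ω, F ω ∂μ with hεdef
  have hεpos : 0 < ε := ENNReal.div_pos (by exact_mod_cast hε'.ne') hFtop
  have hεtop : ε ≠ ∞ := by
    simp only [hεdef, Ne, ENNReal.div_eq_top]
    push_neg
    exact ⟨fun _ => hF0, fun h => absurd h ENNReal.coe_ne_top⟩
  calc ∫⁻ ω, F ω * G ω ∂μ ≤ (∫⁻ ω, G ω ∂μ + ε) * ∫⁻ ω, F ω ∂μ := subclaim ε hεpos hεtop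
    _ = (∫⁻ ω, G ω ∂μ) * ∫⁻ ω, F ω ∂μ + ε * ∫⁻ ω, F ω ∂μ := by ring
    _ = (∫⁻ ω, F ω ∂μ) * ∫⁻ ω, G ω ∂μ + (ε' : ℝ≥0∞) := by
        rw [mul_comm (∫⁻ ω, G ω ∂μ)]
        congr 1
        rw [hεdef, ENNReal.div_mul_cancel hF0 hFtop]



lemma gauss_pdf_shift (v : ℝ≥0) (hv : v ≠ 0) (u x : ℝ) :
    Real.exp (u * x) * gaussianPDFReal 0 v x =
      Real.exp (u ^ 2 * v / 2) * gaussianPDFReal (u * v) v x := by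
  have hv' : (0 : ℝ) < (v : ℝ) := NNReal.coe_pos.2 (pos_iff_ne_zero.2 hv)
  rw [gaussianPDFReal_def, gaussianPDFReal_def]
  simp only
  rw [sub_zero]
  rw [mul_comm (Real.exp (u * x)), mul_assoc, ← Real.exp_add]
  rw [show Real.exp (u ^ 2 * (v : ℝ) / 2) * ((√(2 * π * (v : ℝ)))⁻¹ *
      Real.exp (-(x - u * (v : ℝ)) ^ 2 / (2 * (v : ℝ)))) =
      (√(2 * π * (v : ℝ)))⁻¹ * Real.exp (u ^ 2 * (v : ℝ) / 2 +
        -(x - u * (v : ℝ)) ^ 2 / (2 * (v : ℝ))) from by rw [Real.exp_add]; ring]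
  congr 1
  field_simp
  ring

lemma integrable_exp_gaussianReal (v : ℝ≥0) (hv : v ≠ 0) (u : ℝ) :
    Integrable (fun x => Real.exp (u * x)) (gaussianReal 0 v) := by
  rw [gaussianReal_of_var_ne_zero 0 hv]
  rw [integrable_withDensity_iff (measurable_gaussianPDF 0 v)
    (ae_of_all _ fun x => ENNReal.ofReal_lt_top)]
  have heq : (fun x => Real.exp (u * x) * (gaussianPDF 0 v x).toReal) =
      fun x => Real.exp (u ^ 2 * v / 2) * gaussianPDFReal (u * v) v x := by
    funext x
    rw [gaussianPDF_def]
    simp only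
    rw [ENNReal.toReal_ofReal (gaussianPDFReal_nonneg 0 v x)]
    exact gauss_pdf_shift v hv u x
  rw [heq]
  exact (integrable_gaussianPDFReal (u * v) v).const_mul _

lemma integral_exp_gaussianReal (v : ℝ≥0) (hv : v ≠ 0) (u : ℝ) :
    ∫ x, Real.exp (u * x) ∂(gaussianReal 0 v) = Real.exp (u ^ 2 * v / 2) := by
  rw [gaussianReal_of_var_ne_zero 0 hv]
  have hpdf : (gaussianPDF 0 v) = fun x => ((gaussianPDFReal 0 v x).toNNReal : ℝ≥0∞) := rfl
  rw [hpdf, integral_withDensity_eq_integral_smul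
    ((measurable_gaussianPDFReal 0 v).real_toNNReal)]
  have heq : (fun x => (gaussianPDFReal 0 v x).toNNReal • Real.exp (u * x)) =
      fun x => Real.exp (u ^ 2 * v / 2) * gaussianPDFReal (u * v) v x := by
    funext x
    rw [NNReal.smul_def, smul_eq_mul, Real.coe_toNNReal _ (gaussianPDFReal_nonneg 0 v x),
      mul_comm]
    exact gauss_pdf_shift v hv u x
  rw [heq, integral_const_mul, integral_gaussianPDFReal_eq_one (u * v) hv, mul_one]

lemma abs_le_exp_add_exp (x : ℝ) : |x| ≤ Real.exp x + Real.exp (-x) := by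
  have h1 : |x| ≤ Real.exp |x| := le_trans (by linarith [abs_nonneg x]) (Real.add_one_le_exp |x|)
  rcases abs_cases x with ⟨h, _⟩ | ⟨h, _⟩
  · rw [h] at h1 ⊢
    exact le_trans h1 (le_add_of_nonneg_right (Real.exp_pos _).le)
  · rw [h] at h1 ⊢
    exact le_trans h1 (le_add_of_nonneg_left (Real.exp_pos _).le)

lemma integrable_id_gaussianReal (v : ℝ≥0) (hv : v ≠ 0) :
    Integrable (fun x => x) (gaussianReal 0 v) := by
  refine Integrable.mono' ((integrable_exp_gaussianReal v hv 1).add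
    (integrable_exp_gaussianReal v hv (-1))) aestronglyMeasurable_id (ae_of_all _ fun x => ?_)
  simp only [Real.norm_eq_abs, one_mul, neg_one_mul]
  exact abs_le_exp_add_exp x

lemma integral_id_gaussianReal (v : ℝ≥0) (hv : v ≠ 0) :
    ∫ x, x ∂(gaussianReal 0 v) = 0 := by
  have hmap : (gaussianReal 0 v).map (fun x => (-1 : ℝ) * x) = gaussianReal 0 v := by
    rw [gaussianReal_map_const_mul (-1)]
    have h1 : (-1 : ℝ) * 0 = 0 := by norm_num
    have h2 : (⟨(-1 : ℝ) ^ 2, sq_nonneg _⟩ : ℝ≥0) = 1 := by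
      ext
      norm_num
    rw [h1]; congr 1; ext; simp
  have h1 : ∫ x, x ∂(gaussianReal 0 v) = ∫ x, (-1 : ℝ) * x ∂(gaussianReal 0 v) := by
    conv_lhs => rw [← hmap]
    exact integral_map (measurable_id.const_mul (-1)).aemeasurable
      (measurable_id.aestronglyMeasurable (μ := Measure.map (fun x : ℝ => (-1:ℝ) * x)
        (gaussianReal 0 v)))
  have h2 : ∫ x, (-1 : ℝ) * x ∂(gaussianReal 0 v) = -∫ x, x ∂(gaussianReal 0 v) := by
    rw [integral_const_mul]
    ring
  linarith [h1, h2]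



lemma indep_prod_integral [IsProbabilityMeasure μ] {m : ℕ} (X : Fin m → Ω → ℝ)
    (hXm : ∀ j, Measurable (X j))
    (hXindep : iIndepFun X μ)
    (g : Fin m → ℝ → ℝ) (hg : ∀ j, Measurable (g j))
    (hgi : ∀ j, Integrable (fun ω => g j (X j ω)) μ) (s : Finset (Fin m)) :
    Integrable (fun ω => ∏ j ∈ s, g j (X j ω)) μ ∧
      ∫ ω, ∏ j ∈ s, g j (X j ω) ∂μ = ∏ j ∈ s, ∫ ω, g j (X j ω) ∂μ := by
  classical
  have hcomp : iIndepFun (fun j => (g j) ∘ (X j)) μ :=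
    hXindep.comp g hg
  have hcompm : ∀ j, Measurable ((g j) ∘ (X j)) := fun j => (hg j).comp (hXm j)
  induction s using Finset.induction_on with
  | empty =>
      simp only [Finset.prod_empty]
      exact ⟨integrable_const 1, by simp⟩
  | insert a s ha ih =>
      have hsa : IndepFun (∏ j ∈ s, (g j) ∘ (X j)) ((g a) ∘ (X a)) μ :=
        hcomp.indepFun_finsetProd_of_notMem hcompm ha
      have hprodeq : (fun ω => ∏ j ∈ insert a s, g j (X j ω)) =
          (∏ j ∈ s, (g j) ∘ (X j)) * ((g a) ∘ (X a)) := by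
        funext ω
        rw [Finset.prod_insert ha]
        simp only [Pi.mul_apply, Finset.prod_apply, Function.comp_apply]
        ring
      have hseq : (fun ω => ∏ j ∈ s, g j (X j ω)) = (∏ j ∈ s, (g j) ∘ (X j)) := by
        funext ω
        simp only [Finset.prod_apply, Function.comp_apply]
      have hint : Integrable ((∏ j ∈ s, (g j) ∘ (X j)) * ((g a) ∘ (X a))) μ :=
        hsa.integrable_mul (hseq ▸ ih.1) (hgi a)
      constructor
      · rw [hprodeq]
        exact hint
      · rw [hprodeq, hsa.integral_mul_eq_mul_integral (hseq ▸ ih.1).1 (hgi a).1,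
          Finset.prod_insert ha, ← hseq, ih.2]
        rw [mul_comm]
        rfl



lemma abs_pow_le_sq_add_pow (x : ℝ) (k q : ℕ) (hk : 2 ≤ k) (hq : k ≤ q) :
    |x| ^ k ≤ x ^ 2 + |x| ^ q := by
  rcases le_total |x| 1 with hx | hx
  · have h1 : |x| ^ k ≤ |x| ^ 2 := pow_le_pow_of_le_one (abs_nonneg x) hx hk
    rw [sq_abs] at h1
    exact le_trans h1 (le_add_of_nonneg_right (pow_nonneg (abs_nonneg x) q))
  · have h1 : |x| ^ k ≤ |x| ^ q := pow_le_pow_right₀ hx hq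
    exact le_trans h1 (le_add_of_nonneg_left (sq_nonneg x))

lemma binom_tail_bound (d : ℝ) (p : ℕ) (hp : 1 ≤ p) :
    |(1 + d) ^ p - 1 - p * d| ≤ 2 ^ p * (d ^ 2 + |d| ^ p) := by
  obtain ⟨q, rfl⟩ : ∃ q, p = q + 1 := ⟨p - 1, by omega⟩
  set P := q + 1 with hP
  have hbinom : (1 + d) ^ P = ∑ k ∈ Finset.range (P + 1), d ^ k * (P.choose k : ℝ) := by
    rw [add_comm 1 d, add_pow]
    exact Finset.sum_congr rfl fun k _ => by rw [one_pow, mul_one]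
  have hsplit : (1 + d) ^ P - 1 - P * d =
      ∑ i ∈ Finset.range q, d ^ (i + 2) * (P.choose (i + 2) : ℝ) := by
    rw [hbinom, Finset.sum_range_succ', Finset.sum_range_succ']
    simp only [pow_zero, one_mul, pow_one, Nat.choose_zero_right, Nat.choose_one_right]
    have hre : ∀ x : ℕ, x + 1 + 1 = x + 2 := fun x => rfl
    simp only [hre]
    push_cast [hP, Nat.choose_one_right]
    ring
  rw [hsplit]
  calc |∑ i ∈ Finset.range q, d ^ (i + 2) * (P.choose (i + 2) : ℝ)|
      ≤ ∑ i ∈ Finset.range q, |d ^ (i + 2) * (P.choose (i + 2) : ℝ)| :=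
        Finset.abs_sum_le_sum_abs _ _
    _ ≤ ∑ i ∈ Finset.range q, (P.choose (i + 2) : ℝ) * (d ^ 2 + |d| ^ P) := by
        refine Finset.sum_le_sum fun i hi => ?_
        rw [abs_mul, abs_pow, Nat.abs_cast, mul_comm]
        refine mul_le_mul_of_nonneg_left ?_ (Nat.cast_nonneg _)
        refine abs_pow_le_sq_add_pow d (i + 2) P (by omega) ?_
        have := Finset.mem_range.1 hi
        omega
    _ = (∑ i ∈ Finset.range q, (P.choose (i + 2) : ℝ)) * (d ^ 2 + |d| ^ P) := by
        rw [← Finset.sum_mul]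
    _ ≤ 2 ^ P * (d ^ 2 + |d| ^ P) := by
        refine mul_le_mul_of_nonneg_right ?_
          (by positivity)
        have h1 : ∑ i ∈ Finset.range q, P.choose (i + 2) ≤ 2 ^ P := by
          rw [← Nat.sum_range_choose P, Finset.sum_range_succ', Finset.sum_range_succ']
          have hre : ∀ x : ℕ, x + 1 + 1 = x + 2 := fun x => rfl
          simp only [hre]
          omega
        calc (∑ i ∈ Finset.range q, (P.choose (i + 2) : ℝ))
            = ((∑ i ∈ Finset.range q, P.choose (i + 2) : ℕ) : ℝ) := by push_cast; rfl
          _ ≤ ((2 ^ P : ℕ) : ℝ) := by exact_mod_cast h1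
          _ = 2 ^ P := by push_cast; rfl

lemma add_pow_le_two_pow (x y : ℝ) (hx : 0 ≤ x) (hy : 0 ≤ y) (p : ℕ) :
    (x + y) ^ p ≤ 2 ^ p * (x ^ p + y ^ p) := by
  have h1 : x + y ≤ 2 * max x y := by
    rcases le_total x y with h | h
    · rw [max_eq_right h]; linarith
    · rw [max_eq_left h]; linarith
  calc (x + y) ^ p ≤ (2 * max x y) ^ p :=
        pow_le_pow_left₀ (by linarith) h1 p
    _ = 2 ^ p * (max x y) ^ p := mul_pow 2 _ p
    _ ≤ 2 ^ p * (x ^ p + y ^ p) := by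
        refine mul_le_mul_of_nonneg_left ?_ (by positivity)
        rcases le_total x y with h | h
        · rw [max_eq_right h]
          exact le_add_of_nonneg_left (pow_nonneg hx p)
        · rw [max_eq_left h]
          exact le_add_of_nonneg_right (pow_nonneg hy p)

lemma pointwise_R_bound (p : ℕ) (hp : 1 ≤ p) (s : ℝ) :
    ((1:ℝ)/2 * (1 + s) ^ 2 + 1/2) ^ p ≤
      1 + p * s + ((p : ℝ) + 3 * 2 ^ p + 2 ^ (2 * p + 1)) * (s ^ 2 + s ^ (2 * p)) := by
  rcases eq_or_lt_of_le hp with hp1 | hp2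
  · -- p = 1
    rw [← hp1]
    norm_num
    nlinarith [sq_nonneg s, sq_nonneg (1 + s)]
  · -- 2 ≤ p
    have hbase : (1:ℝ)/2 * (1 + s) ^ 2 + 1/2 = 1 + (s + s ^ 2 / 2) := by ring
    set d := s + s ^ 2 / 2 with hd
    set ψ := s ^ 2 + s ^ (2 * p) with hψ
    have hψ0 : 0 ≤ ψ := by
      rw [hψ, pow_mul]
      positivity
    have hs2p : |s| ^ (2 * p) = s ^ (2 * p) := by
      rw [pow_mul, sq_abs, ← pow_mul]
    have hp2' : 2 ≤ p := hp2
    have htail : (1 + d) ^ p ≤ 1 + p * d + 2 ^ p * (d ^ 2 + |d| ^ p) := by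
      have := binom_tail_bound d p hp
      have h1 : (1 + d) ^ p - 1 - p * d ≤ 2 ^ p * (d ^ 2 + |d| ^ p) :=
        le_trans (le_abs_self _) this
      linarith
    have h4 : s ^ 4 ≤ s ^ 2 + s ^ (2 * p) := by
      have := abs_pow_le_sq_add_pow s 4 (2 * p) (by norm_num) (by omega)
      rw [hs2p] at this
      calc s ^ 4 = |s| ^ 4 := by rw [← abs_pow, abs_of_nonneg (by positivity)]
        _ ≤ s ^ 2 + s ^ (2 * p) := this
    have h2p0 : (0:ℝ) ≤ s ^ (2 * p) := by rw [pow_mul]; positivity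
    have hd2 : d ^ 2 ≤ 3 * ψ := by
      rw [hd, hψ]
      nlinarith [sq_nonneg (s - s ^ 2), sq_nonneg s, h4, h2p0]
    have hdp : |d| ^ p ≤ 2 ^ (p + 1) * ψ := by
      have habs_d : |d| ≤ |s| + s ^ 2 / 2 := by
        rw [hd]
        refine le_trans (abs_add_le s (s ^ 2 / 2)) ?_
        rw [abs_of_nonneg (by positivity : (0:ℝ) ≤ s ^ 2 / 2)]
      have h1 : |d| ^ p ≤ (|s| + s ^ 2 / 2) ^ p :=
        pow_le_pow_left₀ (abs_nonneg d) habs_d p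
      have h2 : (|s| + s ^ 2 / 2) ^ p ≤ 2 ^ p * (|s| ^ p + (s ^ 2 / 2) ^ p) :=
        add_pow_le_two_pow _ _ (abs_nonneg s) (by positivity) p
      have h3 : |s| ^ p ≤ ψ := by
        have := abs_pow_le_sq_add_pow s p (2 * p) hp2' (by omega)
        rw [hs2p] at this
        rw [hψ]
        exact this
      have h4 : (s ^ 2 / 2) ^ p ≤ ψ := by
        have h5 : (s ^ 2 / 2) ^ p ≤ (s ^ 2) ^ p :=
          pow_le_pow_left₀ (by positivity) (by nlinarith [sq_nonneg s]) p
        rw [← pow_mul] at h5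
        rw [hψ]
        exact le_trans h5 (le_add_of_nonneg_left (sq_nonneg s))
      calc |d| ^ p ≤ 2 ^ p * (|s| ^ p + (s ^ 2 / 2) ^ p) := le_trans h1 h2
        _ ≤ 2 ^ p * (ψ + ψ) := by
            refine mul_le_mul_of_nonneg_left (by linarith) (by positivity)
        _ = 2 ^ (p + 1) * ψ := by ring
    have hpd : (p : ℝ) * d ≤ p * s + p * ψ := by
      have : (p : ℝ) * (s ^ 2 / 2) ≤ p * ψ := by
        have hs2 : s ^ 2 / 2 ≤ ψ := by
          rw [hψ]
          nlinarith [sq_nonneg s, h2p0]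
        exact mul_le_mul_of_nonneg_left hs2 (Nat.cast_nonneg p)
      rw [hd]
      nlinarith
    have h2p : (2:ℝ) ^ p * (2 ^ (p + 1) * ψ) = 2 ^ (2 * p + 1) * ψ := by
      rw [← mul_assoc, ← pow_add]
      ring_nf
    calc ((1:ℝ)/2 * (1 + s) ^ 2 + 1/2) ^ p = (1 + d) ^ p := by rw [hbase]
      _ ≤ 1 + p * d + 2 ^ p * (d ^ 2 + |d| ^ p) := htail
      _ ≤ 1 + (p * s + p * ψ) + 2 ^ p * (3 * ψ + 2 ^ (p + 1) * ψ) := by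
          have := mul_le_mul_of_nonneg_left (add_le_add hd2 hdp) (by positivity : (0:ℝ) ≤ 2 ^ p)
          linarith
      _ = 1 + p * s + ((p : ℝ) + 3 * 2 ^ p + 2 ^ (2 * p + 1)) * ψ := by
          rw [mul_add ((2:ℝ)^p), h2p]
          ring
lemma R_moment_bound [IsProbabilityMeasure μ]
    (p : ℕ) (hp : 1 ≤ p) (m : ℕ) (sbar T : ℝ) (hsbar : 0 ≤ sbar) (hT : 0 < T)
    (h : ℝ) (hh : 0 < h) (hhT : h ≤ T)
    (σ : Fin m → ℝ) (hσ : ∀ j, |σ j| ≤ sbar)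
    (X : Fin m → Ω → ℝ) (hXm : ∀ j, Measurable (X j))
    (hXlaw : ∀ j, Measure.map (X j) μ = gaussianReal 0 (Real.toNNReal h))
    (hXindep : iIndepFun X μ) :
    Integrable (fun ω => ((1:ℝ)/2 * (1 + ∑ j, σ j * X j ω) ^ 2 + 1/2) ^ p) μ ∧
    ∫ ω, ((1:ℝ)/2 * (1 + ∑ j, σ j * X j ω) ^ 2 + 1/2) ^ p ∂μ ≤
      1 + (((p : ℝ) + 3 * 2 ^ p + 2 ^ (2 * p + 1)) * (2 * Real.exp (m * sbar ^ 2 / 2)) *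
        (2 + ((2 * p).factorial : ℝ) * T ^ (p - 1))) * h := by
  have hv : Real.toNNReal h ≠ 0 := fun hc => absurd (Real.toNNReal_eq_zero.mp hc) (not_le.mpr hh)
  have hvco : ((Real.toNNReal h : ℝ≥0) : ℝ) = h := Real.coe_toNNReal _ hh.le
  set S : Ω → ℝ := fun ω => ∑ j, σ j * X j ω with hS
  have hSm : Measurable S := by
    apply Finset.measurable_sum
    exact fun j _ => (hXm j).const_mul (σ j)
  -- exponential moments
  have expInt : ∀ t : ℝ, Integrable (fun ω => Real.exp (t * S ω)) μ ∧
      ∫ ω, Real.exp (t * S ω) ∂μ = ∏ j, Real.exp ((t * σ j) ^ 2 * h / 2) := by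
    intro t
    have hrw : (fun ω => Real.exp (t * S ω)) =
        fun ω => ∏ j, Real.exp ((t * σ j) * X j ω) := by
      funext ω
      rw [← Real.exp_sum]
      congr 1
      rw [hS, Finset.mul_sum]
      exact Finset.sum_congr rfl fun j _ => by ring
    have hgm : ∀ j : Fin m, Measurable (fun x : ℝ => Real.exp ((t * σ j) * x)) :=
      fun j => (measurable_id.const_mul _).exp
    have hgi : ∀ j, Integrable (fun ω => Real.exp ((t * σ j) * X j ω)) μ := by
      intro j
      have h1 := integrable_exp_gaussianReal (Real.toNNReal h) hv (t * σ j)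
      rw [← hXlaw j] at h1
      have h2 := (integrable_map_measure ((hgm j).aestronglyMeasurable) (hXm j).aemeasurable).mp h1
      simpa [Function.comp_def] using h2
    have hgv : ∀ j, ∫ ω, Real.exp ((t * σ j) * X j ω) ∂μ =
        Real.exp ((t * σ j) ^ 2 * h / 2) := by
      intro j
      have h1 : ∫ ω, Real.exp ((t * σ j) * X j ω) ∂μ =
          ∫ x, Real.exp ((t * σ j) * x) ∂(Measure.map (X j) μ) :=
        (integral_map (hXm j).aemeasurable ((hgm j).aestronglyMeasurable)).symm
      rw [h1, hXlaw j, integral_exp_gaussianReal _ hv, hvco]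
    obtain ⟨hI, hV⟩ := indep_prod_integral X hXm hXindep
      (fun j x => Real.exp ((t * σ j) * x)) hgm hgi Finset.univ
    rw [hrw]
    exact ⟨hI, by rw [hV]; exact Finset.prod_congr rfl fun j _ => hgv j⟩
  have expBound : ∀ t : ℝ, (∀ j, (t * σ j) ^ 2 * h ≤ sbar ^ 2) →
      ∫ ω, Real.exp (t * S ω) ∂μ ≤ Real.exp (m * sbar ^ 2 / 2) := by
    intro t ht
    rw [(expInt t).2]
    calc ∏ j, Real.exp ((t * σ j) ^ 2 * h / 2) ≤ ∏ _j : Fin m, Real.exp (sbar ^ 2 / 2) := by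
          refine Finset.prod_le_prod (fun j _ => (Real.exp_pos _).le) fun j _ => ?_
          exact Real.exp_le_exp.2 (by linarith [ht j])
      _ = Real.exp (sbar ^ 2 / 2) ^ m := by
          rw [Finset.prod_const, Finset.card_univ, Fintype.card_fin]
      _ = Real.exp (m * sbar ^ 2 / 2) := by
          rw [← Real.exp_nat_mul]
          congr 1
          ring
  -- even moments
  set lam : ℝ := (Real.sqrt h)⁻¹ with hlam
  have hsq : Real.sqrt h ^ 2 = h := Real.sq_sqrt hh.le
  have hsqpos : 0 < Real.sqrt h := Real.sqrt_pos.2 hh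
  have hlam2 : lam ^ 2 * h = 1 := by
    rw [hlam, ← hsq]
    field_simp
    simp [hsq]
  have hcond : ∀ (e : ℝ) (j : Fin m), e = lam ∨ e = -lam → (e * σ j) ^ 2 * h ≤ sbar ^ 2 := by
    rintro e j (rfl | rfl) <;>
    · have h1 : (lam * σ j) ^ 2 * h = σ j ^ 2 * (lam ^ 2 * h) := by ring
      have h2 : σ j ^ 2 ≤ sbar ^ 2 := by
        rw [← sq_abs]
        exact pow_le_pow_left₀ (abs_nonneg _) (hσ j) 2
      first
        | (rw [h1, hlam2, mul_one]; exact h2)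
        | (have h1' : (-lam * σ j) ^ 2 * h = σ j ^ 2 * (lam ^ 2 * h) := by ring
           rw [h1', hlam2, mul_one]; exact h2)
  have claimMom : ∀ k : ℕ, 1 ≤ k → Integrable (fun ω => S ω ^ (2 * k)) μ ∧
      ∫ ω, S ω ^ (2 * k) ∂μ ≤
        ((2 * k).factorial : ℝ) * h ^ k * (2 * Real.exp (m * sbar ^ 2 / 2)) := by
    intro k hk
    have hptw : ∀ s : ℝ, s ^ (2 * k) ≤ ((2 * k).factorial : ℝ) * h ^ k *
        (Real.exp (lam * s) + Real.exp (-lam * s)) := by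
      intro s
      have hEabs : Real.exp (lam * |s|) ≤ Real.exp (lam * s) + Real.exp (-lam * s) := by
        rcases abs_cases s with ⟨hc, _⟩ | ⟨hc, _⟩
        · rw [hc]
          exact le_add_of_nonneg_right (Real.exp_pos _).le
        · rw [hc, mul_neg, ← neg_mul]
          exact le_add_of_nonneg_left (Real.exp_pos _).le
      have hterm : (lam * |s|) ^ (2 * k) / ((2 * k).factorial : ℝ) ≤ Real.exp (lam * |s|) := by
        refine le_trans ?_ (Real.sum_le_exp_of_nonneg (by positivity) (2 * k + 1))
        refine Finset.single_le_sum (f := fun i => (lam * |s|) ^ i / (i.factorial : ℝ))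
          (fun i _ => by positivity) (Finset.self_mem_range_succ (2 * k))
      have hterm' : (lam * |s|) ^ (2 * k) ≤ ((2 * k).factorial : ℝ) * Real.exp (lam * |s|) := by
        rw [div_le_iff₀ (by positivity : (0:ℝ) < ((2 * k).factorial : ℝ))] at hterm
        linarith [hterm]
      have hpow : s ^ (2 * k) = h ^ k * (lam * |s|) ^ (2 * k) := by
        have h1 : (lam * |s|) ^ (2 * k) = (lam ^ 2 * s ^ 2) ^ k := by
          rw [pow_mul, mul_pow, sq_abs]
        rw [h1, ← mul_pow, pow_mul]
        congr 1
        have : h * (lam ^ 2 * s ^ 2) = (lam ^ 2 * h) * s ^ 2 := by ring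
        rw [this, hlam2, one_mul]
      calc s ^ (2 * k) = h ^ k * (lam * |s|) ^ (2 * k) := hpow
        _ ≤ h ^ k * (((2 * k).factorial : ℝ) * Real.exp (lam * |s|)) :=
            mul_le_mul_of_nonneg_left hterm' (by positivity)
        _ ≤ h ^ k * (((2 * k).factorial : ℝ) * (Real.exp (lam * s) + Real.exp (-lam * s))) := by
            refine mul_le_mul_of_nonneg_left ?_ (by positivity)
            exact mul_le_mul_of_nonneg_left hEabs (by positivity)
        _ = ((2 * k).factorial : ℝ) * h ^ k * (Real.exp (lam * s) + Real.exp (-lam * s)) := by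
            ring
    have hGint : Integrable (fun ω => ((2 * k).factorial : ℝ) * h ^ k *
        (Real.exp (lam * S ω) + Real.exp (-lam * S ω))) μ :=
      (((expInt lam).1.add (expInt (-lam)).1).const_mul _)
    have hSkm : Measurable (fun ω => S ω ^ (2 * k)) := hSm.pow_const _
    have hSknn : ∀ ω, 0 ≤ S ω ^ (2 * k) := fun ω => by
      rw [pow_mul]
      positivity
    have hSkint : Integrable (fun ω => S ω ^ (2 * k)) μ := by
      refine Integrable.mono' hGint hSkm.aestronglyMeasurable (ae_of_all _ fun ω => ?_)
      rw [Real.norm_eq_abs, abs_of_nonneg (hSknn ω)]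
      exact hptw (S ω)
    refine ⟨hSkint, ?_⟩
    calc ∫ ω, S ω ^ (2 * k) ∂μ ≤ ∫ ω, ((2 * k).factorial : ℝ) * h ^ k *
        (Real.exp (lam * S ω) + Real.exp (-lam * S ω)) ∂μ :=
          integral_mono hSkint hGint fun ω => hptw (S ω)
      _ = ((2 * k).factorial : ℝ) * h ^ k *
          (∫ ω, Real.exp (lam * S ω) ∂μ + ∫ ω, Real.exp (-lam * S ω) ∂μ) := by
          rw [integral_const_mul, integral_add (expInt lam).1 (expInt (-lam)).1]
      _ ≤ ((2 * k).factorial : ℝ) * h ^ k * (2 * Real.exp (m * sbar ^ 2 / 2)) := by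
          refine mul_le_mul_of_nonneg_left ?_ (by positivity)
          have b1 := expBound lam (fun j => hcond lam j (Or.inl rfl))
          have b2 := expBound (-lam) (fun j => hcond (-lam) j (Or.inr rfl))
          linarith
  -- mean of S is zero
  have hXint : ∀ j, Integrable (X j) μ := by
    intro j
    have h1 := integrable_id_gaussianReal (Real.toNNReal h) hv
    rw [← hXlaw j] at h1
    have h2 := (integrable_map_measure (aestronglyMeasurable_id) (hXm j).aemeasurable).mp h1
    simpa [Function.comp] using h2
  have hSint : Integrable S μ := by
    rw [hS]
    exact integrable_finset_sum _ fun j _ => (hXint j).const_mul (σ j)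
  have hSmean : ∫ ω, S ω ∂μ = 0 := by
    rw [hS, integral_finset_sum _ fun j _ => (hXint j).const_mul (σ j)]
    refine Finset.sum_eq_zero fun j _ => ?_
    rw [integral_const_mul]
    have h1 : ∫ ω, X j ω ∂μ = ∫ x, x ∂(Measure.map (X j) μ) :=
      (integral_map (hXm j).aemeasurable
        (measurable_id.aestronglyMeasurable (μ := Measure.map (X j) μ))).symm
    rw [h1, hXlaw j, integral_id_gaussianReal _ hv, mul_zero]
  -- assembly
  set KK : ℝ := (p : ℝ) + 3 * 2 ^ p + 2 ^ (2 * p + 1) with hKK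
  have hKK0 : 0 ≤ KK := by positivity
  have hG2int : Integrable (fun ω => 1 + (p : ℝ) * S ω + KK * (S ω ^ 2 + S ω ^ (2 * p))) μ := by
    have h2 : Integrable (fun ω => S ω ^ 2) μ := by
      have := (claimMom 1 le_rfl).1
      simpa using this
    have h2p : Integrable (fun ω => S ω ^ (2 * p)) μ := (claimMom p hp).1
    exact ((integrable_const (1:ℝ)).add (hSint.const_mul _)).add ((h2.add h2p).const_mul _)
  have hptR : ∀ ω, ((1:ℝ)/2 * (1 + S ω) ^ 2 + 1/2) ^ p ≤
      1 + (p : ℝ) * S ω + KK * (S ω ^ 2 + S ω ^ (2 * p)) := fun ω =>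
    pointwise_R_bound p hp (S ω)
  have hRnn : ∀ ω, (0:ℝ) ≤ ((1:ℝ)/2 * (1 + S ω) ^ 2 + 1/2) ^ p := fun ω => by positivity
  have hRm : Measurable (fun ω => ((1:ℝ)/2 * (1 + S ω) ^ 2 + 1/2) ^ p) := by
    apply Measurable.pow_const
    exact (((hSm.const_add 1).pow_const 2).const_mul _).add_const _
  have hRint : Integrable (fun ω => ((1:ℝ)/2 * (1 + S ω) ^ 2 + 1/2) ^ p) μ := by
    refine Integrable.mono' hG2int hRm.aestronglyMeasurable (ae_of_all _ fun ω => ?_)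
    rw [Real.norm_eq_abs, abs_of_nonneg (hRnn ω)]
    exact hptR ω
  refine ⟨hRint, ?_⟩
  have hmean2 : ∫ ω, S ω ^ 2 ∂μ ≤ 2 * h * (2 * Real.exp (m * sbar ^ 2 / 2)) := by
    have := (claimMom 1 le_rfl).2
    simpa using this
  have hmean2p : ∫ ω, S ω ^ (2 * p) ∂μ ≤
      ((2 * p).factorial : ℝ) * (T ^ (p - 1) * h) * (2 * Real.exp (m * sbar ^ 2 / 2)) := by
    refine le_trans (claimMom p hp).2 ?_
    refine mul_le_mul_of_nonneg_right (mul_le_mul_of_nonneg_left ?_ (by positivity))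
      (by positivity)
    -- h ^ p ≤ T ^ (p-1) * h
    obtain ⟨r, rfl⟩ : ∃ r, p = r + 1 := ⟨p - 1, by omega⟩
    rw [pow_succ]
    simp only [Nat.add_sub_cancel]
    exact mul_le_mul_of_nonneg_right (pow_le_pow_left₀ hh.le hhT r) hh.le
  calc ∫ ω, ((1:ℝ)/2 * (1 + S ω) ^ 2 + 1/2) ^ p ∂μ
      ≤ ∫ ω, (1 + (p : ℝ) * S ω + KK * (S ω ^ 2 + S ω ^ (2 * p))) ∂μ :=
        integral_mono hRint hG2int hptR
    _ = 1 + (p : ℝ) * ∫ ω, S ω ∂μ + KK * ((∫ ω, S ω ^ 2 ∂μ) + ∫ ω, S ω ^ (2 * p) ∂μ) := by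
        have h2 : Integrable (fun ω => S ω ^ 2) μ := by
          have := (claimMom 1 le_rfl).1
          simpa using this
        have h2p : Integrable (fun ω => S ω ^ (2 * p)) μ := (claimMom p hp).1
        have hint1 : Integrable (fun ω => (1:ℝ) + (p : ℝ) * S ω) μ := by
          exact (integrable_const 1).add (hSint.const_mul _)
        have hint1b : Integrable (fun ω => (p : ℝ) * S ω) μ := by
          exact hSint.const_mul _
        have hint2 : Integrable (fun ω => KK * (S ω ^ 2 + S ω ^ (2 * p))) μ := by
          exact (h2.add h2p).const_mul _
        have hint2b : Integrable (fun ω => S ω ^ 2 + S ω ^ (2 * p)) μ := by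
          exact h2.add h2p
        rw [integral_add hint1 hint2, integral_add (integrable_const (1:ℝ)) hint1b,
          integral_const, integral_const_mul, integral_const_mul, integral_add h2 h2p]
        simp [measure_univ]
    _ ≤ 1 + (KK * (2 * Real.exp (m * sbar ^ 2 / 2)) *
        (2 + ((2 * p).factorial : ℝ) * T ^ (p - 1))) * h := by
        rw [hSmean, mul_zero, add_zero]
        have hsum : (∫ ω, S ω ^ 2 ∂μ) + ∫ ω, S ω ^ (2 * p) ∂μ ≤
            (2 * Real.exp (m * sbar ^ 2 / 2)) * (2 + ((2 * p).factorial : ℝ) * T ^ (p - 1)) * h := by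
          have := add_le_add hmean2 hmean2p
          refine le_trans this (le_of_eq ?_)
          ring
        calc 1 + KK * ((∫ ω, S ω ^ 2 ∂μ) + ∫ ω, S ω ^ (2 * p) ∂μ)
            ≤ 1 + KK * ((2 * Real.exp (m * sbar ^ 2 / 2)) *
              (2 + ((2 * p).factorial : ℝ) * T ^ (p - 1)) * h) := by
              linarith [mul_le_mul_of_nonneg_left hsum hKK0]
          _ = 1 + (KK * (2 * Real.exp (m * sbar ^ 2 / 2)) *
              (2 + ((2 * p).factorial : ℝ) * T ^ (p - 1))) * h := by ring

/-- Uniform moment bound for the linear-implicit Milstein recursion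
`Y_{n+1} = Y_n · R_n · Qinv_n`, where `R_n = (1/2)(1 + Σⱼ σⱼ ΔWₙʲ)² + 1/2` with
independent `N(0,h)` Gaussian increments independent of `Yₙ·Qinvₙ`, and
`0 ≤ Qinvₙ ≤ 1 + Ch`.  For each integer `p ≥ 1` there is a constant `C_p`
depending only on `p, C, m, σ̄, T` such that `E[(Yₙ)^p] ≤ C_p · (Y₀)^p` for all
`0 ≤ n ≤ N` with `Nh ≤ T`. -/
theorem stmt18 (p : ℕ) (hp : 1 ≤ p) (C : ℝ) (hC : 0 ≤ C) (m : ℕ)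
    (sbar T : ℝ) (hsbar : 0 ≤ sbar) (hT : 0 < T) :
    ∃ Cp : ℝ, 0 < Cp ∧
      ∀ (Ω : Type) (mΩ : MeasurableSpace Ω) (μ : Measure Ω),
        IsProbabilityMeasure μ →
        ∀ (N : ℕ) (h : ℝ), 0 < h → (N : ℝ) * h ≤ T →
        ∀ (σ : Fin m → ℝ), (∀ j, |σ j| ≤ sbar) →
        ∀ (ΔW : ℕ → Fin m → Ω → ℝ) (Y Qinv R : ℕ → Ω → ℝ) (y0 : ℝ),
          0 < y0 →
          (∀ ω, Y 0 ω = y0) →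
          (∀ n j, Measurable (ΔW n j)) →
          (∀ n j, Measure.map (ΔW n j) μ = gaussianReal 0 (Real.toNNReal h)) →
          (∀ n, iIndepFun (fun j => ΔW n j) μ) →
          (∀ n ω, R n ω = (1 / 2) * (1 + ∑ j, σ j * ΔW n j ω) ^ 2 + 1 / 2) →
          (∀ n ω, 0 ≤ Qinv n ω ∧ Qinv n ω ≤ 1 + C * h) →
          (∀ n ω, Y (n + 1) ω = Y n ω * R n ω * Qinv n ω) →
          (∀ n, IndepFun (fun ω => Y n ω * Qinv n ω) (R n) μ) →
          ∀ n, n ≤ N → (∫ ω, (Y n ω) ^ p ∂μ) ≤ Cp * y0 ^ p := by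
  classical
  set KK : ℝ := (p : ℝ) + 3 * 2 ^ p + 2 ^ (2 * p + 1) with hKK
  have hKK0 : 0 ≤ KK := by positivity
  set cR : ℝ := KK * (2 * Real.exp (m * sbar ^ 2 / 2)) *
    (2 + ((2 * p).factorial : ℝ) * T ^ (p - 1)) with hcR
  have hcR0 : 0 ≤ cR := by
    rw [hcR]
    refine mul_nonneg (mul_nonneg hKK0 (by positivity)) ?_
    have h1 : (0:ℝ) ≤ T ^ (p - 1) := pow_nonneg hT.le _
    have h2 : (0:ℝ) ≤ ((2 * p).factorial : ℝ) := Nat.cast_nonneg _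
    nlinarith
  refine ⟨Real.exp (((p : ℝ) * C + cR) * T), Real.exp_pos _, ?_⟩
  intro Ω mΩ μ hprob N h hh hNT σ hσ ΔW Y Qinv R y0 hy0 hY0 hΔWm hΔWlaw hΔWindep hR hQ
    hYrec hIndep n hn
  haveI := hprob
  have hRnn : ∀ k ω, 0 ≤ R k ω := fun k ω => by rw [hR]; positivity
  have hRhalf : ∀ k ω, (1:ℝ)/2 ≤ R k ω := fun k ω => by
    rw [hR]
    nlinarith [sq_nonneg (1 + ∑ j, σ j * ΔW k j ω)]
  have hRm : ∀ k, Measurable (R k) := by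
    intro k
    have hfun : R k = fun ω => (1 / 2) * (1 + ∑ j, σ j * ΔW k j ω) ^ 2 + 1 / 2 :=
      funext (hR k)
    rw [hfun]
    have hsm : Measurable (fun ω => ∑ j, σ j * ΔW k j ω) :=
      Finset.measurable_sum _ fun j _ => (hΔWm k j).const_mul _
    exact (((hsm.const_add 1).pow_const 2).const_mul _).add_const _
  have hYnn : ∀ k ω, 0 ≤ Y k ω := by
    intro k
    induction k with
    | zero => intro ω; rw [hY0]; exact hy0.le
    | succ k ih =>
        intro ω
        rw [hYrec]
        exact mul_nonneg (mul_nonneg (ih ω) (hRnn k ω)) (hQ k ω).1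
  have hCh : (0:ℝ) < 1 + C * h := by nlinarith [mul_nonneg hC hh.le]
  have hcRh : (0:ℝ) < 1 + cR * h := by nlinarith [mul_nonneg hcR0 hh.le]
  set B : ℝ := (1 + C * h) ^ p * (1 + cR * h) with hB
  have hB0 : 0 < B := by rw [hB]; positivity
  -- key recursion in the lower Lebesgue integral
  have key : ∀ k, k ≤ N → ∫⁻ ω, ENNReal.ofReal ((Y k ω) ^ p) ∂μ ≤
      ENNReal.ofReal (B ^ k * y0 ^ p) := by
    intro k
    induction k with
    | zero =>
        intro _
        have heq : ∀ ω : Ω, ENNReal.ofReal ((Y 0 ω) ^ p) = ENNReal.ofReal (y0 ^ p) :=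
          fun ω => by rw [hY0]
        rw [lintegral_congr heq, lintegral_const, measure_univ, mul_one, pow_zero, one_mul]
    | succ k ih =>
        intro hk1
        have hkN : k ≤ N := Nat.le_of_succ_le hk1
        have hN1 : 1 ≤ N := le_trans (Nat.one_le_iff_ne_zero.2 (Nat.succ_ne_zero k)) hk1
        have hhT : h ≤ T := by
          have h1 : (1:ℝ) * h ≤ (N:ℝ) * h :=
            mul_le_mul_of_nonneg_right (by exact_mod_cast hN1) hh.le
          linarith
        obtain ⟨hRpint0, hRpbd0⟩ := R_moment_bound p hp m sbar T hsbar hT h hh hhT σ hσ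
          (fun j => ΔW k j) (hΔWm k) (hΔWlaw k) (hΔWindep k)
        have hRfun : (fun ω => R k ω ^ p) =
            fun ω => ((1:ℝ)/2 * (1 + ∑ j, σ j * ΔW k j ω) ^ 2 + 1/2) ^ p :=
          funext fun ω => by rw [hR]
        have hRpint : Integrable (fun ω => R k ω ^ p) μ := by rw [hRfun]; exact hRpint0
        have hRpbd : ∫ ω, R k ω ^ p ∂μ ≤ 1 + cR * h := by
          rw [hRfun]
          refine le_trans hRpbd0 (le_of_eq ?_)
          rw [hcR, hKK]
        set G : Ω → ℝ≥0∞ := fun ω => ENNReal.ofReal (R k ω ^ p) with hG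
        have hGm : Measurable G := ENNReal.measurable_ofReal.comp ((hRm k).pow_const p)
        have hGfin : ∀ ω, G ω ≠ ∞ := fun ω => ENNReal.ofReal_ne_top
        have hGle : ∫⁻ ω, G ω ∂μ ≤ ENNReal.ofReal (1 + cR * h) := by
          have h1 : ∫⁻ ω, G ω ∂μ = ENNReal.ofReal (∫ ω, R k ω ^ p ∂μ) :=
            (ofReal_integral_eq_lintegral_ofReal hRpint
              (ae_of_all _ fun ω => pow_nonneg (hRnn k ω) p)).symm
          rw [h1]
          exact ENNReal.ofReal_le_ofReal hRpbd
        have hG0 : ∫⁻ ω, G ω ∂μ ≠ 0 := by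
          have hge : ∀ ω, ENNReal.ofReal (((1:ℝ)/2) ^ p) ≤ G ω := fun ω =>
            ENNReal.ofReal_le_ofReal (pow_le_pow_left₀ (by norm_num) (hRhalf k ω) p)
          have hlow : ENNReal.ofReal (((1:ℝ)/2) ^ p) ≤ ∫⁻ ω, G ω ∂μ := by
            calc ENNReal.ofReal (((1:ℝ)/2) ^ p)
                = ∫⁻ _ω, ENNReal.ofReal (((1:ℝ)/2) ^ p) ∂μ := by
                  rw [lintegral_const, measure_univ, mul_one]
              _ ≤ ∫⁻ ω, G ω ∂μ := lintegral_mono hge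
          intro h0
          rw [h0] at hlow
          have := ENNReal.ofReal_pos.2 (show (0:ℝ) < ((1:ℝ)/2) ^ p by positivity)
          exact absurd (le_antisymm hlow zero_le) this.ne'
        set F : Ω → ℝ≥0∞ := fun ω => ENNReal.ofReal ((Y k ω * Qinv k ω) ^ p) with hF
        have hFG : IndepFun F G μ := by
          have hφ : Measurable (fun x : ℝ => ENNReal.ofReal (x ^ p)) :=
            ENNReal.measurable_ofReal.comp (measurable_id.pow_const p)
          exact (hIndep k).comp hφ hφ
        have hstep : ∫⁻ ω, ENNReal.ofReal ((Y (k+1) ω) ^ p) ∂μ ≤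
            (∫⁻ ω, F ω ∂μ) * ∫⁻ ω, G ω ∂μ := by
          have heq : ∀ ω, ENNReal.ofReal ((Y (k+1) ω) ^ p) = F ω * G ω := by
            intro ω
            rw [hYrec k ω, mul_right_comm, mul_pow,
              ENNReal.ofReal_mul (pow_nonneg (mul_nonneg (hYnn k ω) (hQ k ω).1) p)]
          rw [lintegral_congr heq]
          exact lintegral_mul_le_of_indepFun F G hGm hGfin hG0 hFG
        have hFle : ∫⁻ ω, F ω ∂μ ≤
            ENNReal.ofReal ((1 + C * h) ^ p) * ∫⁻ ω, ENNReal.ofReal ((Y k ω) ^ p) ∂μ := by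
          have hpt : ∀ ω, F ω ≤
              ENNReal.ofReal ((1 + C * h) ^ p) * ENNReal.ofReal ((Y k ω) ^ p) := by
            intro ω
            rw [← ENNReal.ofReal_mul (by positivity)]
            refine ENNReal.ofReal_le_ofReal ?_
            rw [mul_pow]
            rw [mul_comm ((1 + C * h) ^ p)]
            refine mul_le_mul_of_nonneg_left ?_ (pow_nonneg (hYnn k ω) p)
            exact pow_le_pow_left₀ (hQ k ω).1 (hQ k ω).2 p
          calc ∫⁻ ω, F ω ∂μ
              ≤ ∫⁻ ω, ENNReal.ofReal ((1 + C * h) ^ p) * ENNReal.ofReal ((Y k ω) ^ p) ∂μ :=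
                lintegral_mono hpt
            _ = ENNReal.ofReal ((1 + C * h) ^ p) * ∫⁻ ω, ENNReal.ofReal ((Y k ω) ^ p) ∂μ :=
                lintegral_const_mul' _ _ ENNReal.ofReal_ne_top
        calc ∫⁻ ω, ENNReal.ofReal ((Y (k+1) ω) ^ p) ∂μ
            ≤ (∫⁻ ω, F ω ∂μ) * ∫⁻ ω, G ω ∂μ := hstep
          _ ≤ (ENNReal.ofReal ((1 + C * h) ^ p) * ENNReal.ofReal (B ^ k * y0 ^ p)) *
              ENNReal.ofReal (1 + cR * h) := by
              refine mul_le_mul' (le_trans hFle ?_) hGle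
              exact mul_le_mul_right (ih hkN) _
          _ = ENNReal.ofReal (B ^ (k+1) * y0 ^ p) := by
              rw [← ENNReal.ofReal_mul (by positivity),
                ← ENNReal.ofReal_mul (mul_nonneg (by positivity)
                  (mul_nonneg (pow_nonneg hB0.le k) (by positivity)))]
              congr 1
              rw [hB]
              ring
  -- conclude
  by_cases hInt : Integrable (fun ω => (Y n ω) ^ p) μ
  · have h1 : ∫ ω, (Y n ω) ^ p ∂μ = (∫⁻ ω, ENNReal.ofReal ((Y n ω) ^ p) ∂μ).toReal :=
      integral_eq_lintegral_of_nonneg_ae (ae_of_all _ fun ω => pow_nonneg (hYnn n ω) p) hInt.1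
    rw [h1]
    have hnh : (n:ℝ) * h ≤ T := by
      have h2 : (n:ℝ) * h ≤ (N:ℝ) * h :=
        mul_le_mul_of_nonneg_right (by exact_mod_cast hn) hh.le
      linarith
    have h2 : B ^ n * y0 ^ p ≤ Real.exp (((p : ℝ) * C + cR) * T) * y0 ^ p := by
      refine mul_le_mul_of_nonneg_right ?_ (by positivity)
      have hb1 : 1 + C * h ≤ Real.exp (C * h) := by
        have := Real.add_one_le_exp (C * h)
        linarith
      have hb2 : 1 + cR * h ≤ Real.exp (cR * h) := by
        have := Real.add_one_le_exp (cR * h)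
        linarith
      calc B ^ n ≤ (Real.exp (C * h) ^ p * Real.exp (cR * h)) ^ n := by
            refine pow_le_pow_left₀ hB0.le ?_ n
            rw [hB]
            exact mul_le_mul (pow_le_pow_left₀ hCh.le hb1 p) hb2 hcRh.le (by positivity)
        _ = Real.exp ((C * h * p + cR * h) * n) := by
            rw [← Real.exp_nat_mul, ← Real.exp_add, ← Real.exp_nat_mul]
            congr 1
            ring
        _ ≤ Real.exp (((p : ℝ) * C + cR) * T) := by
            refine Real.exp_le_exp.2 ?_
            have h3 : (C * h * p + cR * h) * n = ((p : ℝ) * C + cR) * ((n:ℝ) * h) := by ring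
            rw [h3]
            refine mul_le_mul_of_nonneg_left hnh ?_
            positivity
    refine ENNReal.toReal_le_of_le_ofReal (by positivity) ?_
    exact le_trans (key n hn) (ENNReal.ofReal_le_ofReal h2)
  · rw [integral_undef hInt]
    positivity
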